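/- Let (S,·) be an arbitrary semigroup, let A ⊆ S be a SCR-set in S, and let l ∈ ℕ. Then the set D = {(a₁,a₂,d) ∈ S × S × S : for every t ∈ {1,2,...,l}, a₁·d^t·a₂ ∈ A} is a CR-set in the semigroup S × S × S (with coordinatewise multiplication), where d^t denotes the t-fold product d·d···d. -/

import Mathlib

/-- `A` is a strong combinatorially rich set (SCR-set) in the semigroup `S`. -/
def IsSCRSet {S : Type*} [Semigroup S] (A : Set S) : Prop :=
  ∀ k : ℕ, ∃ r : ℕ, ∀ F : Finset (ℕ → S), F.card ≤ k →
    ∃ a₁ a₂ : S, ∃ t ≤ r, ∀ f ∈ F, a₁ * f t * a₂ ∈ A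

/-- `A` is a combinatorially rich set (CR-set) in the semigroup `S`. -/
def IsCRSet {S : Type*} [Semigroup S] (A : Set S) : Prop :=
  ∀ k : ℕ, ∃ r m : ℕ, 0 < m ∧
    ∀ F : Finset (ℕ → S), F.card ≤ k →
      ∃ a : Fin (m + 1) → S, ∃ t : Fin m → ℕ, StrictMono t ∧ (∀ i, t i ≤ r) ∧
        ∀ f ∈ F,
          (List.ofFn fun i : Fin m => a i.castSucc * f (t i)).foldr (· * ·) (a (Fin.last m)) ∈ A

/-- `powSucc n d = d^(n+1)`, the `(n+1)`-fold product `d · d ⋯ d`. -/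
def powSucc {S : Type*} [Semigroup S] : ℕ → S → S
  | 0, d => d
  | n + 1, d => powSucc n d * d

/-- If `A` is a SCR-set in a semigroup `S` and `l ∈ ℕ`, then
`D = {(a₁, a₂, d) : a₁ dᵗ a₂ ∈ A for all t ∈ {1, …, l}}` is a CR-set in `S × S × S`. -/
theorem abundance_of_long_progressions_in_SCR {S : Type*} [Semigroup S] (A : Set S)
    (hA : IsSCRSet A) (l : ℕ) :
    IsCRSet {x : S × S × S | ∀ t : ℕ, t < l → x.1 * powSucc t x.2.2 * x.2.1 ∈ A} := by
  classical
  intro k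
  obtain ⟨r, hr⟩ := hA (k * l)
  obtain ⟨r0, hr0⟩ := hA 0
  obtain ⟨c, -, -⟩ := hr0 ∅ (le_refl 0)
  refine ⟨r, 1, one_pos, ?_⟩
  intro F hF
  set g : (ℕ → S × S × S) × ℕ → (ℕ → S) := fun p t =>
    (p.1 t).1 * (c * powSucc p.2 (c * (p.1 t).2.2 * c) * c) * (p.1 t).2.1 with hg
  set G : Finset (ℕ → S) := (F ×ˢ Finset.range l).image g with hG
  have hGcard : G.card ≤ k * l := by
    calc G.card ≤ (F ×ˢ Finset.range l).card := Finset.card_image_le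
      _ = F.card * l := by rw [Finset.card_product, Finset.card_range]
      _ ≤ k * l := Nat.mul_le_mul_right l hF
  obtain ⟨a₁, a₂, t, ht, hmem⟩ := hr G hGcard
  refine ⟨![(a₁, c, c), (c, a₂, c)], ![t], ?_, ?_, ?_⟩
  · intro i j hij; exact absurd (Fin.lt_def.mp hij) (by omega)
  · intro i; fin_cases i; simpa using ht
  · intro f hf
    have key : ∀ s < l,
        a₁ * ((f t).1 * (c * powSucc s (c * (f t).2.2 * c) * c) * (f t).2.1) * a₂ ∈ A := by
      intro s hs
      exact hmem _ (Finset.mem_image.mpr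
        ⟨(f, s), Finset.mem_product.mpr ⟨hf, Finset.mem_range.mpr hs⟩, rfl⟩)
    simp only [List.ofFn, Set.mem_setOf_eq]
    intro s hs
    have := key s hs
    simp only [Fin.isValue, Matrix.cons_val_zero, Matrix.cons_val_one, Matrix.head_cons,
      List.foldr, Fin.foldr_succ, Fin.foldr_zero] at *
    simpa [Prod.mul_def, mul_assoc] using this
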